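/- Let X ⊂ ℝ² satisfy |x−y| ≥ 1 for all distinct x, y ∈ X, and let x ∈ X. Then the number of points y ∈ X \ {x} with |x−y| ≤ √2 is at most 8. -/

import Mathlib

open Real

private lemma cos_two_pi_div_nine : 3/4 < Real.cos (2*π/9) := by
  have hpi := Real.pi_pos
  have h3 : Real.cos (3 * (2*π/9)) = -(1/2) := by
    rw [show (3:ℝ) * (2*π/9) = π - π/3 by ring, Real.cos_pi_sub, Real.cos_pi_div_three]
  have hc3 := Real.cos_three_mul (2*π/9)
  set c := Real.cos (2*π/9) with hc
  have hgt : 1/2 < c := by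
    have h := Real.cos_lt_cos_of_nonneg_of_le_pi (x := 2*π/9) (y := π/3) (by positivity)
      (by linarith) (by linarith)
    rwa [Real.cos_pi_div_three] at h
  by_contra hle
  push_neg at hle
  nlinarith [mul_nonneg (by linarith : (0:ℝ) ≤ 3/4 - c)
    (by nlinarith : (0:ℝ) ≤ 4*c^2+3*c-3/4)]

private lemma gap_lemma (d : ℝ) (h0 : 0 < d) (h2 : d < 2*π) (hcos : Real.cos d ≤ 3/4) :
    2*π/9 < d ∧ d < 16*π/9 := by
  have hpi := Real.pi_pos
  have hc := cos_two_pi_div_nine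
  constructor
  · by_contra h
    push_neg at h
    have : Real.cos (2*π/9) ≤ Real.cos d :=
      Real.cos_le_cos_of_nonneg_of_le_pi (by linarith) (by linarith) h
    linarith
  · by_contra h
    push_neg at h
    have he : Real.cos d = Real.cos (2*π - d) := by
      rw [Real.cos_sub]
      simp [Real.cos_two_pi, Real.sin_two_pi]
    have : Real.cos (2*π/9) ≤ Real.cos (2*π - d) :=
      Real.cos_le_cos_of_nonneg_of_le_pi (by linarith) (by linarith) (by linarith)
    linarith [he ▸ this]

private lemma angles_lemma (b : Fin 9 → ℝ) (hmem : ∀ i, b i ∈ Set.Ioc (-π) π)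
    (hmono : StrictMono b)
    (hcos : ∀ i j, i ≠ j → Real.cos (b i - b j) ≤ 3/4) : False := by
  have hpi := Real.pi_pos
  have gap : ∀ i j : Fin 9, i < j → 2*π/9 < b j - b i ∧ b j - b i < 16*π/9 := by
    intro i j hij
    have h1 := (hmem i).1; have h2 := (hmem i).2
    have h3 := (hmem j).1; have h4 := (hmem j).2
    exact gap_lemma _ (by have := hmono hij; linarith) (by linarith)
      (by rw [show b j - b i = -(b i - b j) by ring, Real.cos_neg]; exact hcos i j hij.ne)
  have g0 := (gap 0 1 (by decide)).1
  have g1 := (gap 1 2 (by decide)).1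
  have g2 := (gap 2 3 (by decide)).1
  have g3 := (gap 3 4 (by decide)).1
  have g4 := (gap 4 5 (by decide)).1
  have g5 := (gap 5 6 (by decide)).1
  have g6 := (gap 6 7 (by decide)).1
  have g7 := (gap 7 8 (by decide)).1
  have g8 := (gap 0 8 (by decide)).2
  linarith

private lemma alg_aux (r s : ℝ) (hr : 1 ≤ r) (hs : 1 ≤ s) (hr2 : r^2 ≤ 2) (hs2 : s^2 ≤ 2) :
    r^2 + s^2 - 1 ≤ 3/2 * (r*s) := by
  nlinarith [mul_nonneg (by nlinarith : (0:ℝ) ≤ 2 - r^2) (by nlinarith : (0:ℝ) ≤ r^2 - 1),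
    mul_nonneg (by nlinarith : (0:ℝ) ≤ 2 - s^2) (by nlinarith : (0:ℝ) ≤ s^2 - 1),
    mul_nonneg (by nlinarith : (0:ℝ) ≤ 2 - r^2) (by nlinarith : (0:ℝ) ≤ 2 - s^2),
    mul_pos (by linarith : (0:ℝ) < r) (by linarith : (0:ℝ) < s),
    sq_nonneg (r - s), sq_nonneg (r*s - 2), sq_nonneg (r + s)]

private lemma cos_arg_sub_le (z w : ℂ) (hz1 : 1 ≤ ‖z‖)
    (hz2 : ‖z‖ ≤ Real.sqrt 2)
    (hw1 : 1 ≤ ‖w‖) (hw2 : ‖w‖ ≤ Real.sqrt 2)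
    (hd : 1 ≤ ‖z - w‖) : Real.cos (z.arg - w.arg) ≤ 3/4 := by
  have hz0 : z ≠ 0 := by intro h; rw [h] at hz1; simp at hz1; linarith
  have hw0 : w ≠ 0 := by intro h; rw [h] at hw1; simp at hw1; linarith
  set r := ‖z‖ with hrdef
  set s := ‖w‖ with hsdef
  have hr2 : r^2 ≤ 2 := by
    have : r^2 ≤ (Real.sqrt 2)^2 := sq_le_sq' (by linarith [Real.sqrt_nonneg 2]) hz2
    rwa [Real.sq_sqrt (by norm_num)] at this
  have hs2 : s^2 ≤ 2 := by
    have : s^2 ≤ (Real.sqrt 2)^2 := sq_le_sq' (by linarith [Real.sqrt_nonneg 2]) hw2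
    rwa [Real.sq_sqrt (by norm_num)] at this
  have hre : r^2 = z.re^2 + z.im^2 := by rw [hrdef, Complex.sq_norm, Complex.normSq_apply]; ring
  have hse : s^2 = w.re^2 + w.im^2 := by rw [hsdef, Complex.sq_norm, Complex.normSq_apply]; ring
  have hdd : 1 ≤ (z.re - w.re)^2 + (z.im - w.im)^2 := by
    have h1 : (1:ℝ) ≤ ‖z-w‖ ^ 2 := by nlinarith [norm_nonneg (z-w)]
    rw [Complex.sq_norm, Complex.normSq_apply, Complex.sub_re, Complex.sub_im] at h1; nlinarith
  have hP : z.re * w.re + z.im * w.im ≤ 3/4 * (r * s) := by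
    have := alg_aux r s hz1 hw1 hr2 hs2
    nlinarith
  have hcos : Real.cos (z.arg - w.arg) = (z.re * w.re + z.im * w.im) / (r * s) := by
    rw [Real.cos_sub, Complex.cos_arg hz0, Complex.sin_arg, Complex.cos_arg hw0, Complex.sin_arg]
    field_simp
    rw [hrdef, hsdef]; ring
  rw [hcos, div_le_iff₀ (by positivity)]
  exact hP

private lemma nine_complex (w : Fin 9 → ℂ)
    (habs1 : ∀ i, 1 ≤ ‖w i‖) (habs2 : ∀ i, ‖w i‖ ≤ Real.sqrt 2)
    (hd : ∀ i j, i ≠ j → 1 ≤ ‖w i - w j‖) : False := by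
  set a : Fin 9 → ℝ := fun i => (w i).arg with ha
  have hcos : ∀ i j, i ≠ j → Real.cos (a i - a j) ≤ 3/4 := fun i j hij =>
    cos_arg_sub_le (w i) (w j) (habs1 i) (habs2 i) (habs1 j) (habs2 j) (hd i j hij)
  have hainj : Function.Injective a := by
    intro i j hij
    by_contra h
    have := hcos i j h
    rw [hij, sub_self, Real.cos_zero] at this
    linarith
  set s : Finset ℝ := Finset.univ.image a with hs
  have hcard : s.card = 9 := by
    rw [hs, Finset.card_image_of_injective _ hainj, Finset.card_univ, Fintype.card_fin]
  set b : Fin 9 → ℝ := fun i => (s.orderIsoOfFin hcard i : ℝ) with hb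
  have hbmono : StrictMono b := fun i j hij => by
    exact_mod_cast (s.orderIsoOfFin hcard).strictMono hij
  have hbmem : ∀ i, ∃ k, a k = b i := by
    intro i
    have : (b i) ∈ s := (s.orderIsoOfFin hcard i).2
    rw [hs, Finset.mem_image] at this
    obtain ⟨k, _, hk⟩ := this
    exact ⟨k, hk⟩
  apply angles_lemma b
  · intro i
    obtain ⟨k, hk⟩ := hbmem i
    rw [← hk]
    exact Complex.arg_mem_Ioc _
  · exact hbmono
  · intro i j hij
    obtain ⟨k, hk⟩ := hbmem i
    obtain ⟨k', hk'⟩ := hbmem j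
    have hkk : k ≠ k' := by
      intro h
      exact hij (hbmono.injective (by rw [← hk, ← hk', h]))
    rw [← hk, ← hk']
    exact hcos k k' hkk

private noncomputable def toC (y : EuclideanSpace ℝ (Fin 2)) : ℂ := ⟨y 0, y 1⟩

private lemma toC_dist (y z : EuclideanSpace ℝ (Fin 2)) :
    ‖toC y - toC z‖ = dist y z := by
  rw [EuclideanSpace.dist_eq, Complex.norm_def, Complex.normSq_apply]
  simp [toC, Fin.sum_univ_two, Real.dist_eq, sub_sq, abs_sub_comm]
  ring_nf

/-- If all pairwise distances in X ⊆ ℝ² are at least 1, then any point x ∈ X has at most 8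
other points of X within distance √2. -/
theorem at_most_eight_neighbors (X : Set (EuclideanSpace ℝ (Fin 2)))
    (hX : ∀ x ∈ X, ∀ y ∈ X, x ≠ y → 1 ≤ dist x y)
    (x : EuclideanSpace ℝ (Fin 2)) (hx : x ∈ X) :
    {y ∈ X | y ≠ x ∧ dist x y ≤ Real.sqrt 2}.Finite ∧
      {y ∈ X | y ≠ x ∧ dist x y ≤ Real.sqrt 2}.ncard ≤ 8 := by
  set S := {y ∈ X | y ≠ x ∧ dist x y ≤ Real.sqrt 2} with hS
  have main : ∀ F : Finset (EuclideanSpace ℝ (Fin 2)), ↑F ⊆ S → F.card ≤ 8 := by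
    intro F hF
    by_contra h
    push_neg at h
    obtain ⟨F', hF'sub, hF'card⟩ := F.exists_subset_card_eq (n := 9) (by omega)
    have e := (F'.equivFinOfCardEq hF'card).symm
    set g : Fin 9 → EuclideanSpace ℝ (Fin 2) := fun i => (e i : EuclideanSpace ℝ (Fin 2)) with hg
    have hginj : Function.Injective g := fun i j hij => e.injective (Subtype.ext hij)
    have hgS : ∀ i, g i ∈ S := fun i => hF (hF'sub (e i).2)
    apply nine_complex (fun i => toC (g i) - toC x)
    · intro i
      have h1 : ‖toC (g i) - toC x‖ = dist (g i) x := toC_dist _ _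
      rw [h1, dist_comm]
      exact hX x hx (g i) (hgS i).1 (Ne.symm (hgS i).2.1)
    · intro i
      rw [toC_dist, dist_comm]
      exact (hgS i).2.2
    · intro i j hij
      have heq : (fun i => toC (g i) - toC x) i - (fun i => toC (g i) - toC x) j
          = toC (g i) - toC (g j) := by ring
      rw [heq, toC_dist]
      exact hX (g i) (hgS i).1 (g j) (hgS j).1 (fun hh => hij (hginj hh))
  have hfin : S.Finite := by
    by_contra h
    obtain ⟨F, hFS, hFcard⟩ := Set.Infinite.exists_subset_card_eq h 9
    have := main F hFS
    omega
  refine ⟨hfin, ?_⟩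
  have := main hfin.toFinset (by simp)
  rwa [Set.ncard_eq_toFinset_card _ hfin]
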